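/- Let z = (z₁, …, z_p) be a random vector on a probability space with each component square-integrable and mean zero, with positive definite covariance matrix Σ (Σᵢⱼ = E[zᵢ zⱼ]). Let x : Ω → ℝ be measurable and φ, φ′ : ℝ → ℝ Borel measurable. Suppose φ∘x = ⟨z, θ⟩ + w and φ′∘x = ⟨z, θ′⟩ + w′ almost everywhere, where w and w′ are square-integrable real random variables with mean zero, each independent of z, and where ‖θ‖₂ = ‖θ′‖₂ = 1. If β > 0 and β′ > 0 are constants with β·(φ∘x) = β′·(φ′∘x) almost everywhere, then β = β′, θ = θ′, and φ∘x = φ′∘x almost everywhere. -/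

import Mathlib

open MeasureTheory ProbabilityTheory


private lemma l2_mul_integrable {Ω : Type*} [MeasurableSpace Ω] {μ : Measure Ω}
    {f g : Ω → ℝ} (hf : MemLp f 2 μ) (hg : MemLp g 2 μ) :
    Integrable (fun ω => f ω * g ω) μ := by
  have h : MemLp (f • g) 1 μ := hg.smul hf (hpqr := ⟨by simp [ENNReal.inv_two_add_inv_two]⟩)
  rw [memLp_one_iff_integrable] at h
  exact h

/-- Identifiability of the model `φ(x) = zᵀθ + w` under the normalization `‖θ‖₂ = 1`, `β > 0`:
if `β·(φ∘x) = β'·(φ'∘x)` a.e. then `β = β'`, `θ = θ'`, and `φ∘x = φ'∘x` a.e. -/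
theorem stmt_5 {Ω : Type*} [MeasurableSpace Ω] (μ : Measure Ω) [IsProbabilityMeasure μ]
    {p : ℕ} (z : Ω → (Fin p → ℝ)) (hzmeas : Measurable z)
    (hz2 : ∀ i, MemLp (fun ω => z ω i) 2 μ)
    (hzmean : ∀ i, ∫ ω, z ω i ∂μ = 0)
    (Sig : Matrix (Fin p) (Fin p) ℝ)
    (hSig : ∀ i j, Sig i j = ∫ ω, z ω i * z ω j ∂μ)
    (hSigpd : Sig.PosDef)
    (x : Ω → ℝ) (hx : Measurable x)
    (φ φ' : ℝ → ℝ) (hφ : Measurable φ) (hφ' : Measurable φ')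
    (θ θ' : Fin p → ℝ) (w w' : Ω → ℝ)
    (hw2 : MemLp w 2 μ) (hw'2 : MemLp w' 2 μ)
    (hwmean : ∫ ω, w ω ∂μ = 0) (hw'mean : ∫ ω, w' ω ∂μ = 0)
    (hwindep : IndepFun w z μ) (hw'indep : IndepFun w' z μ)
    (hmodel : (fun ω => φ (x ω)) =ᵐ[μ] fun ω => (∑ j, z ω j * θ j) + w ω)
    (hmodel' : (fun ω => φ' (x ω)) =ᵐ[μ] fun ω => (∑ j, z ω j * θ' j) + w' ω)
    (hθnorm : Real.sqrt (∑ j, θ j ^ 2) = 1) (hθ'norm : Real.sqrt (∑ j, θ' j ^ 2) = 1)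
    (β β' : ℝ) (hβ : 0 < β) (hβ' : 0 < β')
    (heq : (fun ω => β * φ (x ω)) =ᵐ[μ] fun ω => β' * φ' (x ω)) :
    β = β' ∧ θ = θ' ∧ (fun ω => φ (x ω)) =ᵐ[μ] fun ω => φ' (x ω) := by
  have hzz : ∀ i j, Integrable (fun ω => z ω i * z ω j) μ :=
    fun i j => l2_mul_integrable (hz2 i) (hz2 j)
  -- generic computation of ∫ zᵢ (zᵀτ + v)
  have key : ∀ (τ : Fin p → ℝ) (v : Ω → ℝ), MemLp v 2 μ → (∫ ω, v ω ∂μ = 0) →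
      IndepFun v z μ → ∀ i,
      ∫ ω, z ω i * ((∑ j, z ω j * τ j) + v ω) ∂μ = ∑ j, Sig i j * τ j := by
    intro τ v hv2 hvmean hvindep i
    have hind : IndepFun (fun ω => z ω i) v μ :=
      (hvindep.comp measurable_id (measurable_pi_apply i)).symm
    have hzv : ∫ ω, z ω i * v ω ∂μ = 0 := by
      have := hind.integral_mul_eq_mul_integral (hz2 i).aestronglyMeasurable hv2.aestronglyMeasurable
      simpa [Pi.mul_apply, hzmean i] using this
    have hintsum : Integrable (fun ω => ∑ j, z ω i * (z ω j * τ j)) μ :=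
      integrable_finset_sum _ (fun j _ => by
        simpa [mul_assoc] using (hzz i j).mul_const (τ j))
    have hintzv : Integrable (fun ω => z ω i * v ω) μ :=
      l2_mul_integrable (hz2 i) hv2
    calc ∫ ω, z ω i * ((∑ j, z ω j * τ j) + v ω) ∂μ
        = ∫ ω, (∑ j, z ω i * (z ω j * τ j)) + z ω i * v ω ∂μ := by
          congr 1; funext ω; rw [mul_add, Finset.mul_sum]
      _ = (∫ ω, ∑ j, z ω i * (z ω j * τ j) ∂μ) + ∫ ω, z ω i * v ω ∂μ :=
          integral_add hintsum hintzv
      _ = ∑ j, Sig i j * τ j := by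
          rw [hzv, add_zero, integral_finset_sum _ (fun j _ => by
            simpa [mul_assoc] using (hzz i j).mul_const (τ j))]
          refine Finset.sum_congr rfl fun j _ => ?_
          rw [hSig i j, ← integral_mul_const]
          congr 1; funext ω; ring
  -- a.e. equation between the two linear models
  have hae : ∀ᵐ ω ∂μ, β * ((∑ j, z ω j * θ j) + w ω) = β' * ((∑ j, z ω j * θ' j) + w' ω) := by
    filter_upwards [heq, hmodel, hmodel'] with ω h1 h2 h3
    rw [← h2, ← h3]; exact h1
  -- moment equations
  have hmom : ∀ i, β * (∑ j, Sig i j * θ j) = β' * (∑ j, Sig i j * θ' j) := by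
    intro i
    have h1 : ∫ ω, z ω i * (β * ((∑ j, z ω j * θ j) + w ω)) ∂μ
        = ∫ ω, z ω i * (β' * ((∑ j, z ω j * θ' j) + w' ω)) ∂μ := by
      refine integral_congr_ae ?_
      filter_upwards [hae] with ω h; rw [h]
    have h2 : ∫ ω, z ω i * (β * ((∑ j, z ω j * θ j) + w ω)) ∂μ
        = β * ∑ j, Sig i j * θ j := by
      rw [← key θ w hw2 hwmean hwindep i, ← integral_const_mul]
      congr 1; funext ω; ring
    have h3 : ∫ ω, z ω i * (β' * ((∑ j, z ω j * θ' j) + w' ω)) ∂μ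
        = β' * ∑ j, Sig i j * θ' j := by
      rw [← key θ' w' hw'2 hw'mean hw'indep i, ← integral_const_mul]
      congr 1; funext ω; ring
    rw [← h2, ← h3, h1]
  -- deduce βθ = β'θ' via positive definiteness
  have hSv : Sig.mulVec (fun j => β * θ j - β' * θ' j) = 0 := by
    funext i
    have h := hmom i
    show ∑ j, Sig i j * (β * θ j - β' * θ' j) = 0
    have e : ∑ j, Sig i j * (β * θ j - β' * θ' j)
        = (β * ∑ j, Sig i j * θ j) - (β' * ∑ j, Sig i j * θ' j) := by
      rw [Finset.mul_sum, Finset.mul_sum, ← Finset.sum_sub_distrib]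
      exact Finset.sum_congr rfl fun j _ => by ring
    rw [e, h, sub_self]
  have hv0 : (fun j => β * θ j - β' * θ' j) = 0 := by
    by_contra hne
    have h := hSigpd.dotProduct_mulVec_pos hne
    rw [hSv] at h
    simp [dotProduct] at h
  have hβθ : ∀ j, β * θ j = β' * θ' j := by
    intro j
    have := congrFun hv0 j
    simpa [sub_eq_zero] using this
  -- norms
  have hθsq : ∑ j, θ j ^ 2 = 1 := by
    have h := hθnorm
    have hnn : (0:ℝ) ≤ ∑ j, θ j ^ 2 := Finset.sum_nonneg fun j _ => sq_nonneg _
    nlinarith [Real.sq_sqrt hnn]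
  have hθ'sq : ∑ j, θ' j ^ 2 = 1 := by
    have hnn : (0:ℝ) ≤ ∑ j, θ' j ^ 2 := Finset.sum_nonneg fun j _ => sq_nonneg _
    nlinarith [Real.sq_sqrt hnn]
  have hββ' : β = β' := by
    have hsq : β ^ 2 = β' ^ 2 := by
      have : ∑ j, (β * θ j) ^ 2 = ∑ j, (β' * θ' j) ^ 2 :=
        Finset.sum_congr rfl fun j _ => by rw [hβθ j]
      calc β ^ 2 = β ^ 2 * ∑ j, θ j ^ 2 := by rw [hθsq, mul_one]
        _ = ∑ j, (β * θ j) ^ 2 := by rw [Finset.mul_sum]; exact Finset.sum_congr rfl fun j _ => by ring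
        _ = ∑ j, (β' * θ' j) ^ 2 := this
        _ = β' ^ 2 * ∑ j, θ' j ^ 2 := by rw [Finset.mul_sum]; exact Finset.sum_congr rfl fun j _ => by ring
        _ = β' ^ 2 := by rw [hθ'sq, mul_one]
    nlinarith
  have hθθ' : θ = θ' := by
    funext j
    have := hβθ j
    rw [← hββ'] at this
    exact mul_left_cancel₀ hβ.ne' this
  refine ⟨hββ', hθθ', ?_⟩
  filter_upwards [heq] with ω h
  have : β * φ (x ω) = β * φ' (x ω) := by rw [h, hββ']
  exact mul_left_cancel₀ hβ.ne' this
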